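/- Let Φ(t) = e^{t²} − 1 and Φ̃ its complementary N-function. Then for all t, r ≥ 0, Φ̃(tr) ≤ ξ(t) Φ̃(r), where ξ(t) = max{t, t²}. In particular Φ̃ satisfies the Δ₂-condition: Φ̃(2r) ≤ 4 Φ̃(r) for all r ≥ 0. -/

import Mathlib

/-- The N-function `Φ(t) = e^{t²} − 1`. -/
noncomputable def PhiN (t : ℝ) : ℝ := Real.exp (t ^ 2) - 1

/-- The complementary (conjugate) N-function `Φ̃(s) = sup_{t ≥ 0} (st − Φ(t))`. -/
noncomputable def PhiConj (s : ℝ) : ℝ :=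
  sSup ((fun t => s * t - PhiN t) '' Set.Ici (0 : ℝ))

lemma PhiN_nonneg (t : ℝ) : 0 ≤ PhiN t := by
  have := Real.add_one_le_exp (t ^ 2)
  have h : (0:ℝ) ≤ t ^ 2 := sq_nonneg t
  simp only [PhiN]; linarith

lemma PhiConj_bdd (s : ℝ) :
    BddAbove ((fun t => s * t - PhiN t) '' Set.Ici (0 : ℝ)) := by
  refine ⟨s ^ 2 / 4, ?_⟩
  rintro a ⟨u, _, rfl⟩
  have h1 : u ^ 2 + 1 ≤ Real.exp (u ^ 2) := Real.add_one_le_exp (u ^ 2)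
  simp only [PhiN]
  nlinarith [sq_nonneg (u - s / 2)]

lemma PhiConj_nonempty (s : ℝ) :
    ((fun t => s * t - PhiN t) '' Set.Ici (0 : ℝ)).Nonempty :=
  ⟨s * 0 - PhiN 0, ⟨0, Set.mem_Ici.2 le_rfl, rfl⟩⟩

lemma PhiConj_nonneg (s : ℝ) : 0 ≤ PhiConj s := by
  have h : s * 0 - PhiN 0 ∈ (fun t => s * t - PhiN t) '' Set.Ici (0 : ℝ) :=
    ⟨0, Set.mem_Ici.2 le_rfl, rfl⟩
  have := le_csSup (PhiConj_bdd s) h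
  simpa [PhiN, PhiConj] using this

lemma le_PhiConj (s u : ℝ) (hu : 0 ≤ u) : s * u - PhiN u ≤ PhiConj s :=
  le_csSup (PhiConj_bdd s) ⟨u, hu, rfl⟩

lemma exp_key (c x : ℝ) (hc : 1 ≤ c) (hx : 0 ≤ x) :
    c * (Real.exp x - 1) ≤ Real.exp (c * x) - 1 := by
  have h1 : Real.exp (c * x) = Real.exp x * Real.exp ((c - 1) * x) := by
    rw [← Real.exp_add]; ring_nf
  have h2 : (c - 1) * x + 1 ≤ Real.exp ((c - 1) * x) := Real.add_one_le_exp _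
  have h3 : (-x) + 1 ≤ Real.exp (-x) := Real.add_one_le_exp _
  have h4 : Real.exp (-x) * Real.exp x = 1 := by
    rw [← Real.exp_add]; simp
  have e1 : (1 - x) * Real.exp x ≤ 1 := by nlinarith [Real.exp_pos x]
  have e2 : 0 ≤ Real.exp x * x - Real.exp x + 1 := by nlinarith
  have e3 : Real.exp x * ((c - 1) * x + 1) ≤ Real.exp (c * x) := by
    rw [h1]; nlinarith [Real.exp_pos x]
  nlinarith [mul_nonneg (sub_nonneg.2 hc) e2]

theorem stmt1 :
    (∀ t r : ℝ, 0 ≤ t → 0 ≤ r → PhiConj (t * r) ≤ max t (t ^ 2) * PhiConj r) ∧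
    (∀ r : ℝ, 0 ≤ r → PhiConj (2 * r) ≤ 4 * PhiConj r) := by
  have main : ∀ t r : ℝ, 0 ≤ t → 0 ≤ r →
      PhiConj (t * r) ≤ max t (t ^ 2) * PhiConj r := by
    intro t r ht hr
    rcases le_or_gt t 1 with htle | htgt
    · -- case t ≤ 1 : bound by t * PhiConj r
      have hstep : PhiConj (t * r) ≤ t * PhiConj r := by
        apply csSup_le (PhiConj_nonempty _)
        rintro a ⟨u, hu, rfl⟩
        dsimp only
        have h1 : r * u - PhiN u ≤ PhiConj r := le_PhiConj r u hu
        have h2 : (t * r) * u - PhiN u ≤ t * (r * u - PhiN u) := by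
          have := PhiN_nonneg u
          nlinarith
        nlinarith [mul_le_mul_of_nonneg_left h1 ht]
      have := mul_le_mul_of_nonneg_right (le_max_left t (t ^ 2)) (PhiConj_nonneg r)
      linarith
    · -- case t ≥ 1 : bound by t² * PhiConj r
      have ht1 : (1:ℝ) ≤ t := htgt.le
      have htpos : (0:ℝ) < t := lt_of_lt_of_le one_pos ht1
      have hstep : PhiConj (t * r) ≤ t ^ 2 * PhiConj r := by
        apply csSup_le (PhiConj_nonempty _)
        rintro a ⟨u, hu, rfl⟩
        dsimp only
        set w := u / t with hw
        have hwnn : 0 ≤ w := div_nonneg hu htpos.le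
        have huw : u = t * w := by rw [hw]; field_simp [htpos.ne']
        have hc : (1:ℝ) ≤ t ^ 2 := by nlinarith
        have hkey : t ^ 2 * (Real.exp (w ^ 2) - 1) ≤ Real.exp (t ^ 2 * w ^ 2) - 1 :=
          exp_key (t ^ 2) (w ^ 2) hc (sq_nonneg w)
        have hu2 : u ^ 2 = t ^ 2 * w ^ 2 := by rw [huw]; ring
        have h1 : t ^ 2 * PhiN w ≤ PhiN u := by
          simp only [PhiN, hu2]; exact hkey
        have h2 : r * w - PhiN w ≤ PhiConj r := le_PhiConj r w hwnn
        have h3 : (t * r) * u - PhiN u ≤ t ^ 2 * (r * w - PhiN w) := by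
          have e : t * r * u = t ^ 2 * (r * w) := by rw [huw]; ring
          nlinarith [h1]
        nlinarith [mul_le_mul_of_nonneg_left h2 (sq_nonneg t)]
      have := mul_le_mul_of_nonneg_right (le_max_right t (t ^ 2)) (PhiConj_nonneg r)
      linarith
  refine ⟨main, fun r hr => ?_⟩
  have := main 2 r (by norm_num) hr
  norm_num at this
  exact this
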